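/- Let R be a commutative ring and H a commutative bialgebra over R. Define the Adams operations ψ^n : H → H as convolution powers of the identity: ψ⁰ := η ∘ ε (the unit composed with the counit) and ψ^{n+1} := μ ∘ (ψ^n ⊗ id) ∘ Δ. Then for all natural numbers p and q, ψ^p ∘ ψ^q = ψ^{pq}. -/

import Mathlib

noncomputable section

/-- The Adams operations (convolution powers of the identity) on a bialgebra `H`:
`ψ⁰ = η ∘ ε` and `ψ^{n+1} = μ ∘ (ψ^n ⊗ id) ∘ Δ`. -/
def adamsOperation (R H : Type*) [CommRing R] [CommRing H] [Bialgebra R H] :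
    ℕ → (H →ₗ[R] H)
  | 0 => Algebra.linearMap R H ∘ₗ Coalgebra.counit
  | n + 1 =>
      LinearMap.mul' R H ∘ₗ
        TensorProduct.map (adamsOperation R H n) LinearMap.id ∘ₗ Coalgebra.comul

section Aux

open scoped TensorProduct

variable {R H : Type*} [CommRing R] [CommRing H] [Bialgebra R H]

/-- Convolution of linear endomorphisms of a bialgebra. -/
def convAux (f g : H →ₗ[R] H) : H →ₗ[R] H :=
  LinearMap.mul' R H ∘ₗ TensorProduct.map f g ∘ₗ Coalgebra.comul

lemma convAux_apply_repr (f g : H →ₗ[R] H) {a : H} {ι : Type*} (repr : Coalgebra.Repr R a ι) :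
    convAux f g a = ∑ i ∈ repr.index, f (repr.left i) * g (repr.right i) := by
  simp only [convAux, LinearMap.comp_apply, ← repr.eq, map_sum, TensorProduct.map_tmul,
    LinearMap.mul'_apply]

lemma convAux_counit_right (f : H →ₗ[R] H) :
    convAux f (Algebra.linearMap R H ∘ₗ Coalgebra.counit) = f := by
  ext a
  rw [convAux_apply_repr f _ (Coalgebra.Repr.arbitrary R a)]
  have h := congrArg (TensorProduct.rid R H)
    (Coalgebra.sum_map_tmul_counit_eq (R := R) f a (repr := Coalgebra.Repr.arbitrary R a))
  simp only [map_sum, TensorProduct.rid_tmul, one_smul] at h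
  rw [← h]
  refine Finset.sum_congr rfl fun i _ => ?_
  rw [LinearMap.comp_apply, Algebra.linearMap_apply, Algebra.smul_def, mul_comm]

lemma convAux_assoc (f g h : H →ₗ[R] H) :
    convAux (convAux f g) h = convAux f (convAux g h) := by
  ext a
  set repr := Coalgebra.Repr.arbitrary R a with hrepr
  set r1 : ∀ i : H × H, Coalgebra.Repr R (repr.left i) (H × H) :=
    fun i => Coalgebra.Repr.arbitrary R (repr.left i) with hr1
  set r2 : ∀ i : H × H, Coalgebra.Repr R (repr.right i) (H × H) :=
    fun i => Coalgebra.Repr.arbitrary R (repr.right i) with hr2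
  have key := Coalgebra.sum_map_tmul_tmul_eq (R := R) f g h a
    (repr := repr) (a₁ := r1) (a₂ := r2)
  have key2 := congrArg (LinearMap.mul' R H ∘ₗ (LinearMap.mul' R H).lTensor H) key
  simp only [map_sum, LinearMap.comp_apply, LinearMap.lTensor_tmul,
    LinearMap.mul'_apply] at key2
  rw [convAux_apply_repr (convAux f g) h repr, convAux_apply_repr f (convAux g h) repr]
  calc ∑ i ∈ repr.index, convAux f g (repr.left i) * h (repr.right i)
      = ∑ i ∈ repr.index, ∑ j ∈ (r1 i).index,
          f ((r1 i).left j) * (g ((r1 i).right j) * h (repr.right i)) := by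
        refine Finset.sum_congr rfl fun i _ => ?_
        rw [convAux_apply_repr f g (r1 i), Finset.sum_mul]
        exact Finset.sum_congr rfl fun j _ => mul_assoc _ _ _
    _ = ∑ i ∈ repr.index, ∑ j ∈ (r2 i).index,
          f (repr.left i) * (g ((r2 i).left j) * h ((r2 i).right j)) := key2.symm
    _ = ∑ i ∈ repr.index, f (repr.left i) * convAux g h (repr.right i) := by
        refine Finset.sum_congr rfl fun i _ => ?_
        rw [convAux_apply_repr g h (r2 i), Finset.mul_sum]

lemma comp_convAux (w f g : H →ₗ[R] H) (hw : ∀ x y : H, w (x * y) = w x * w y) :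
    w ∘ₗ convAux f g = convAux (w ∘ₗ f) (w ∘ₗ g) := by
  ext a
  rw [LinearMap.comp_apply, convAux_apply_repr f g (Coalgebra.Repr.arbitrary R a),
    convAux_apply_repr (w ∘ₗ f) (w ∘ₗ g) (Coalgebra.Repr.arbitrary R a), map_sum]
  exact Finset.sum_congr rfl fun i _ => by rw [hw]; rfl

lemma convAux_id_mul (f : H →ₗ[R] H) (hf : ∀ x y : H, f (x * y) = f x * f y) (x y : H) :
    convAux f LinearMap.id (x * y)
      = convAux f LinearMap.id x * convAux f LinearMap.id y := by
  have key : ∀ u v : H ⊗[R] H,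
      LinearMap.mul' R H (TensorProduct.map f LinearMap.id (u * v)) =
      LinearMap.mul' R H (TensorProduct.map f LinearMap.id u) *
      LinearMap.mul' R H (TensorProduct.map f LinearMap.id v) := by
    intro u v
    induction u using TensorProduct.induction_on with
    | zero => simp
    | tmul a b =>
      induction v using TensorProduct.induction_on with
      | zero => simp
      | tmul c d =>
        simp only [Algebra.TensorProduct.tmul_mul_tmul, TensorProduct.map_tmul,
          LinearMap.mul'_apply, LinearMap.id_apply, hf]
        ring
      | add v₁ v₂ h1 h2 => simp only [mul_add, map_add, h1, h2]
    | add u₁ u₂ h1 h2 => simp only [add_mul, map_add, h1, h2]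
  simp only [convAux, LinearMap.comp_apply, Bialgebra.comul_mul, key]

lemma adamsOperation_mul (n : ℕ) (x y : H) :
    adamsOperation R H n (x * y) = adamsOperation R H n x * adamsOperation R H n y := by
  induction n generalizing x y with
  | zero =>
    simp [adamsOperation, Bialgebra.counit_mul, map_mul]
  | succ n ih =>
    have h : adamsOperation R H (n + 1) = convAux (adamsOperation R H n) LinearMap.id := rfl
    rw [h]
    exact convAux_id_mul _ (fun a b => ih a b) x y

lemma adamsOperation_one (n : ℕ) : adamsOperation R H n (1 : H) = 1 := by
  induction n with
  | zero => simp [adamsOperation]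
  | succ n ih =>
    show LinearMap.mul' R H (TensorProduct.map (adamsOperation R H n) LinearMap.id
      (Coalgebra.comul (1 : H))) = 1
    rw [Bialgebra.comul_one, Algebra.TensorProduct.one_def]
    simp [ih]

lemma adamsOperation_algebraMap (n : ℕ) (r : R) :
    adamsOperation R H n (algebraMap R H r) = algebraMap R H r := by
  rw [Algebra.algebraMap_eq_smul_one, map_smul, adamsOperation_one]

lemma convAux_adams_adams (a b : ℕ) :
    convAux (adamsOperation R H a) (adamsOperation R H b) = adamsOperation R H (a + b) := by
  induction b with
  | zero =>
    have h0 : adamsOperation R H 0 = Algebra.linearMap R H ∘ₗ Coalgebra.counit := rfl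
    rw [Nat.add_zero, h0, convAux_counit_right]
  | succ b ih =>
    have h : adamsOperation R H (b + 1) = convAux (adamsOperation R H b) LinearMap.id := rfl
    have h' : adamsOperation R H (a + b + 1)
        = convAux (adamsOperation R H (a + b)) LinearMap.id := rfl
    rw [h, ← convAux_assoc, ih]
    exact h'.symm

end Aux

/-- On a commutative bialgebra, the Adams operations satisfy `ψ^p ∘ ψ^q = ψ^{pq}`. -/
theorem adamsOperation_comp (R H : Type*) [CommRing R] [CommRing H] [Bialgebra R H]
    (p q : ℕ) :
    adamsOperation R H p ∘ₗ adamsOperation R H q = adamsOperation R H (p * q) := by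
  induction q with
  | zero =>
    ext a
    show adamsOperation R H p (adamsOperation R H 0 a) = adamsOperation R H (p * 0) a
    rw [Nat.mul_zero]
    show adamsOperation R H p (algebraMap R H (Coalgebra.counit a))
      = algebraMap R H (Coalgebra.counit a)
    exact adamsOperation_algebraMap p _
  | succ q ih =>
    have h : adamsOperation R H (q + 1) = convAux (adamsOperation R H q) LinearMap.id := rfl
    rw [h, comp_convAux _ _ _ (adamsOperation_mul p), ih, LinearMap.comp_id,
      convAux_adams_adams]
    congr 1
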